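/- Let d ≥ 1 and let X, Y, Z, U, V : Fin d → ℝ[t] and T, S ∈ ℝ[t] satisfy, for every i: (X i)² − (T²−1)·(Y i)² = 1, (Y i) − (T−1)·(Z i) = V i, (V i)·(U i) = 1, together with T = S² + 2. Then either all of S, T and all X i, Y i, Z i, U i, V i are constant polynomials, or for every i there exists a nonzero integer N_i such that V i is the constant polynomial with value N_i. -/

import Mathlib

open Polynomial


private lemma pell_base (T Xp : Polynomial ℝ) (hT : 0 < T.natDegree) (c : ℝ)
    (h : Xp ^ 2 - (T ^ 2 - 1) * (C c) ^ 2 = 1) :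
    ∃ (n : ℤ) (ε : ℝ), (ε = 1 ∨ ε = -1) ∧ (T - 1) ∣ (Xp - C ε) ∧ (T - 1) ∣ (C c - C (ε * n)) := by
  have hTne : T ≠ 0 := fun h0 => by simp [h0] at hT
  by_cases hc : c = 0
  · subst hc
    rw [C_0] at h ⊢
    have hx : (Xp - 1) * (Xp + 1) = 0 := by linear_combination h
    rcases mul_eq_zero.mp hx with h0 | h0
    · exact ⟨0, 1, Or.inl rfl, ⟨0, by rw [sub_eq_zero] at h0; simp [h0]⟩, ⟨0, by simp⟩⟩
    · refine ⟨0, -1, Or.inr rfl, ⟨0, ?_⟩, ⟨0, by simp⟩⟩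
      have hx1 : Xp = -1 := eq_neg_of_add_eq_zero_left h0
      simp [hx1]
  · have key : (Xp - C c * T) * (Xp + C c * T) = 1 - C c ^ 2 := by linear_combination h
    by_cases h1c : (1 : ℝ) - c ^ 2 = 0
    · have key0 : (Xp - C c * T) * (Xp + C c * T) = 0 := by
        rw [key, ← C_pow, ← C_1, ← C_sub, h1c, C_0]
      have hc1 : c = 1 ∨ c = -1 := by
        have hcc : (c - 1) * (c + 1) = 0 := by nlinarith
        rcases mul_eq_zero.mp hcc with h' | h'
        · exact Or.inl (by linarith)
        · exact Or.inr (by linarith)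
      rcases mul_eq_zero.mp key0 with h0 | h0
      · -- Xp = C c * T
        have hXp : Xp = C c * T := by rwa [sub_eq_zero] at h0
        rcases hc1 with h' | h' <;> subst h'
        · exact ⟨1, 1, Or.inl rfl, ⟨C 1, by rw [hXp]; simp only [map_neg, map_one]; ring⟩, ⟨0, by norm_num⟩⟩
        · exact ⟨1, -1, Or.inr rfl, ⟨C (-1), by rw [hXp]; simp only [map_neg, map_one]; ring⟩, ⟨0, by norm_num⟩⟩
      · -- Xp = - C c * T
        have hXp : Xp = - (C c * T) := eq_neg_of_add_eq_zero_left h0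
        rcases hc1 with h' | h' <;> subst h'
        · exact ⟨-1, -1, Or.inr rfl, ⟨C (-1), by rw [hXp]; simp only [map_neg, map_one]; ring⟩, ⟨0, by norm_num⟩⟩
        · exact ⟨-1, 1, Or.inl rfl, ⟨C 1, by rw [hXp]; simp only [map_neg, map_one]; ring⟩, ⟨0, by norm_num⟩⟩
    · exfalso
      have hf : Xp - C c * T ≠ 0 := by
        intro h0; rw [h0, zero_mul] at key
        exact h1c (by rwa [← C_pow, ← C_1, ← C_sub, eq_comm, C_eq_zero] at key)
      have hg : Xp + C c * T ≠ 0 := by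
        intro h0; rw [h0, mul_zero] at key
        exact h1c (by rwa [← C_pow, ← C_1, ← C_sub, eq_comm, C_eq_zero] at key)
      have hdeg : (Xp - C c * T).natDegree + (Xp + C c * T).natDegree = 0 := by
        rw [← natDegree_mul hf hg, key, ← C_pow, ← C_1, ← C_sub, natDegree_C]
      obtain ⟨a, ha⟩ := natDegree_eq_zero.mp (Nat.eq_zero_of_add_eq_zero_right hdeg)
      obtain ⟨b, hb⟩ := natDegree_eq_zero.mp (Nat.eq_zero_of_add_eq_zero_left hdeg)
      have h2 : C (2 * c) * T = C b - C a := by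
        rw [C_mul, show (C 2 : Polynomial ℝ) = 2 from map_ofNat C 2]
        linear_combination ha - hb
      have hd0 : (C (2 * c) * T).natDegree = 0 := by rw [h2, ← C_sub, natDegree_C]
      rw [natDegree_C_mul (by simp [hc] : (2:ℝ) * c ≠ 0)] at hd0
      omega

private lemma pell_descent (T : Polynomial ℝ) (hT : 0 < T.natDegree) :
    ∀ (k : ℕ) (Xp Yp : Polynomial ℝ), Yp.natDegree ≤ k →
      Xp ^ 2 - (T ^ 2 - 1) * Yp ^ 2 = 1 →
    ∃ (n : ℤ) (ε : ℝ), (ε = 1 ∨ ε = -1) ∧ (T - 1) ∣ (Xp - C ε) ∧ (T - 1) ∣ (Yp - C (ε * n)) := by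
  have hTne : T ≠ 0 := fun h0 => by simp [h0] at hT
  intro k
  induction k with
  | zero =>
    intro Xp Yp hY h
    obtain ⟨c, hc⟩ := natDegree_eq_zero.mp (Nat.le_zero.mp hY)
    rw [← hc] at h ⊢
    exact pell_base T Xp hT c h
  | succ k ih =>
    intro Xp Yp hY h
    by_cases h0 : Yp.natDegree = 0
    · obtain ⟨c, hc⟩ := natDegree_eq_zero.mp h0
      rw [← hc] at h ⊢
      exact pell_base T Xp hT c h
    · have hYpos : 0 < Yp.natDegree := Nat.pos_of_ne_zero h0
      have hYne : Yp ≠ 0 := fun h' => by simp [h'] at hYpos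
      set Y₁ := T * Yp - Xp with hY₁
      set Y₂ := T * Yp + Xp with hY₂
      have hprod : Y₁ * Y₂ = Yp ^ 2 - 1 := by rw [hY₁, hY₂]; linear_combination -h
      have hsqne : Yp ^ 2 - 1 ≠ 0 := by
        intro h'
        rw [sub_eq_zero] at h'
        have h'' : (Yp ^ 2).natDegree = 0 := by rw [h']; simp
        rw [natDegree_pow] at h''
        omega
      have hdegsq : (Yp ^ 2 - 1).natDegree = 2 * Yp.natDegree := by
        rw [← C_1, natDegree_sub_C, natDegree_pow]
      have hY₁ne : Y₁ ≠ 0 := fun h' => hsqne (by rw [← hprod, h', zero_mul])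
      have hY₂ne : Y₂ ≠ 0 := fun h' => hsqne (by rw [← hprod, h', mul_zero])
      have hsum : Y₁.natDegree + Y₂.natDegree = 2 * Yp.natDegree := by
        rw [← natDegree_mul hY₁ne hY₂ne, hprod, hdegsq]
      have haddeq : Y₁ + Y₂ = C 2 * (T * Yp) := by
        rw [show (C 2 : Polynomial ℝ) = 2 from map_ofNat C 2]; ring
      have hTYdeg : (C 2 * (T * Yp)).natDegree = T.natDegree + Yp.natDegree := by
        rw [natDegree_C_mul (two_ne_zero), natDegree_mul hTne hYne]
      have hmax : T.natDegree + Yp.natDegree ≤ Y₁.natDegree ∨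
          T.natDegree + Yp.natDegree ≤ Y₂.natDegree := by
        have hle := natDegree_add_le Y₁ Y₂
        rw [haddeq, hTYdeg] at hle
        exact le_max_iff.mp hle
      have hcase : Y₁.natDegree < Yp.natDegree ∨ Y₂.natDegree < Yp.natDegree := by omega
      rcases hcase with hc1 | hc2
      · have hs1 : (T * Xp - (T ^ 2 - 1) * Yp) ^ 2 - (T ^ 2 - 1) * Y₁ ^ 2 = 1 := by
          rw [hY₁]; linear_combination h
        obtain ⟨n, ε, hε, ⟨a, ha⟩, ⟨b, hb⟩⟩ := ih (T * Xp - (T ^ 2 - 1) * Yp) Y₁ (by omega) hs1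
        have hC : (C (ε * ((n + 1 : ℤ) : ℝ)) : Polynomial ℝ) = C (ε * n) + C ε := by
          rw [← C_add]; congr 1; push_cast; ring
        refine ⟨n + 1, ε, hε, ⟨(T * Xp - (T ^ 2 - 1) * Yp) + (T + 1) * Y₁ + a, ?_⟩,
          ⟨Y₁ + b + a, ?_⟩⟩
        · linear_combination ha - (T ^ 2 - 1) * hY₁
        · rw [hC]; linear_combination hb + ha - T * hY₁
      · have hs2 : (T * Xp + (T ^ 2 - 1) * Yp) ^ 2 - (T ^ 2 - 1) * Y₂ ^ 2 = 1 := by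
          rw [hY₂]; linear_combination h
        obtain ⟨n, ε, hε, ⟨a, ha⟩, ⟨b, hb⟩⟩ := ih (T * Xp + (T ^ 2 - 1) * Yp) Y₂ (by omega) hs2
        have hC : (C (ε * ((n - 1 : ℤ) : ℝ)) : Polynomial ℝ) = C (ε * n) - C ε := by
          rw [← C_sub]; congr 1; push_cast; ring
        refine ⟨n - 1, ε, hε, ⟨(T * Xp + (T ^ 2 - 1) * Yp) - (T + 1) * Y₂ + a, ?_⟩,
          ⟨Y₂ + b - a, ?_⟩⟩
        · linear_combination ha + (T ^ 2 - 1) * hY₂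
        · rw [hC]; linear_combination hb - ha + T * hY₂

private lemma unit_const {p : Polynomial ℝ} (h : IsUnit p) : ∃ c : ℝ, c ≠ 0 ∧ p = C c := by
  rw [Polynomial.isUnit_iff] at h
  obtain ⟨r, hr, hp⟩ := h
  exact ⟨r, hr.ne_zero, hp.symm⟩

/-- For a solution over `ℝ[t]` of system (1) augmented by `T = S² + 2`, either all of `S`, `T`
and all `X i, Y i, Z i, U i, V i` are constants, or every `V i` is the constant polynomial with
value a nonzero integer `N i`. -/
theorem real_system_dichotomy (d : ℕ) (hd : 1 ≤ d)
    (X Y Z U V : Fin d → Polynomial ℝ) (T S : Polynomial ℝ)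
    (h1 : ∀ i, (X i) ^ 2 - (T ^ 2 - 1) * (Y i) ^ 2 = 1)
    (h2 : ∀ i, (Y i) - (T - 1) * (Z i) = V i)
    (h3 : ∀ i, (V i) * (U i) = 1)
    (h4 : T = S ^ 2 + 2) :
    ((∃ c, S = C c) ∧ (∃ c, T = C c) ∧
      ∀ i, (∃ c, X i = C c) ∧ (∃ c, Y i = C c) ∧ (∃ c, Z i = C c) ∧
        (∃ c, U i = C c) ∧ (∃ c, V i = C c)) ∨
      (∀ i, ∃ N : ℤ, N ≠ 0 ∧ V i = C ((N : ℤ) : ℝ)) := by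
  by_cases hS : ∃ c, S = C c
  · left
    obtain ⟨s, hs⟩ := hS
    have hT : T = C (s ^ 2 + 2) := by
      rw [h4, hs, ← C_pow, map_add, map_ofNat]
    refine ⟨⟨s, hs⟩, ⟨s ^ 2 + 2, hT⟩, fun i => ?_⟩
    set q : ℝ := s ^ 2 + 2 with hq
    set r : ℝ := Real.sqrt (q ^ 2 - 1) with hr
    have hq1 : (1 : ℝ) ≤ q ^ 2 - 1 := by nlinarith [sq_nonneg s, sq_nonneg (s^2)]
    have hr2 : r ^ 2 = q ^ 2 - 1 := Real.sq_sqrt (by linarith)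
    have hrne : r ≠ 0 := by
      intro h'; rw [h'] at hr2; nlinarith
    have hCr : (C r : Polynomial ℝ) ^ 2 = (C q) ^ 2 - 1 := by
      rw [← C_pow, hr2, ← C_pow, C_sub, C_1]
    have key : (X i - C r * Y i) * (X i + C r * Y i) = 1 := by
      have h1i := h1 i
      rw [hT] at h1i
      linear_combination h1i - (Y i) ^ 2 * hCr
    obtain ⟨a, hane, ha⟩ := unit_const (IsUnit.of_mul_eq_one _ key)
    obtain ⟨b, hbne, hb⟩ := unit_const (IsUnit.of_mul_eq_one _
      (by rw [mul_comm] at key; exact key))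
    have hXi : X i = C ((a + b) / 2) := by
      have h2' : (2 : Polynomial ℝ) * X i = C a + C b := by linear_combination ha + hb
      apply mul_left_cancel₀ (by norm_num : (2 : Polynomial ℝ) ≠ 0)
      rw [h2', show (2 : Polynomial ℝ) * C ((a + b) / 2) = C (2 * ((a + b) / 2)) from by
        rw [C_mul, map_ofNat], show (2 : ℝ) * ((a + b) / 2) = a + b from by ring, C_add]
    have hYi : Y i = C ((b - a) / (2 * r)) := by
      have h2' : C (2 * r) * Y i = C b - C a := by
        rw [C_mul, map_ofNat]; linear_combination hb - ha
      have hcne : (C (2 * r) : Polynomial ℝ) ≠ 0 := by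
        rw [Ne, C_eq_zero]; intro h'; apply hrne; linarith
      apply mul_left_cancel₀ hcne
      rw [h2', ← C_mul, ← C_sub]
      congr 1
      field_simp
    obtain ⟨v, hvne, hV⟩ := unit_const (IsUnit.of_mul_eq_one _ (h3 i))
    obtain ⟨u, hune, hU⟩ := unit_const (IsUnit.of_mul_eq_one _
      (by rw [mul_comm]; exact h3 i))
    have hq1ne : q - 1 ≠ 0 := by nlinarith [sq_nonneg s]
    have hZi : Z i = C (((b - a) / (2 * r) - v) / (q - 1)) := by
      have h2i := h2 i
      rw [hYi, hV, hT] at h2i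
      have hzz : C (q - 1) * Z i = C ((b - a) / (2 * r) - v) := by
        rw [C_sub, C_sub, C_1]; linear_combination -h2i
      have hcne : (C (q - 1) : Polynomial ℝ) ≠ 0 := by rw [Ne, C_eq_zero]; exact hq1ne
      apply mul_left_cancel₀ hcne
      rw [hzz, ← C_mul]
      congr 1
      field_simp
    exact ⟨⟨_, hXi⟩, ⟨_, hYi⟩, ⟨_, hZi⟩, ⟨_, hU⟩, ⟨_, hV⟩⟩
  · right
    intro i
    have hSdeg : 0 < S.natDegree := by
      rcases Nat.eq_zero_or_pos S.natDegree with h' | h'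
      · obtain ⟨c, hc⟩ := natDegree_eq_zero.mp h'
        exact absurd ⟨c, hc.symm⟩ hS
      · exact h'
    have hTdeg : 0 < T.natDegree := by
      rw [h4, show (2 : Polynomial ℝ) = C 2 from (map_ofNat C 2).symm, natDegree_add_C,
        natDegree_pow]
      omega
    obtain ⟨v, hvne, hV⟩ := unit_const (IsUnit.of_mul_eq_one _ (h3 i))
    obtain ⟨n, ε, hε, hdX, ⟨b, hb⟩⟩ :=
      pell_descent T hTdeg (Y i).natDegree (X i) (Y i) le_rfl (h1 i)
    have hC : C v - C (ε * (n : ℝ)) = (T - 1) * (b - Z i) := by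
      have h2i := h2 i
      rw [hV] at h2i
      linear_combination hb - h2i
    have hveq : v = ε * n := by
      by_contra hne
      have hbz : b - Z i ≠ 0 := by
        intro h'
        rw [h', mul_zero, ← C_sub, C_eq_zero, sub_eq_zero] at hC
        exact hne hC
      have hT1ne : T - (1 : Polynomial ℝ) ≠ 0 := by
        intro h'
        have hT1 : T = 1 := by rwa [sub_eq_zero] at h'
        rw [hT1] at hTdeg; simp at hTdeg
      have hd : (C v - C (ε * (n : ℝ))).natDegree = 0 := by rw [← C_sub, natDegree_C]
      rw [hC, natDegree_mul hT1ne hbz] at hd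
      have hdT1 : (T - 1).natDegree = T.natDegree := by
        rw [show (1 : Polynomial ℝ) = C 1 from C_1.symm, natDegree_sub_C]
      omega
    rcases hε with hε | hε
    · refine ⟨n, ?_, ?_⟩
      · intro h'; rw [h'] at hveq; simp [hε] at hveq; exact hvne hveq
      · rw [hV, hveq, hε, one_mul]
    · refine ⟨-n, ?_, ?_⟩
      · intro h'; rw [neg_eq_zero] at h'; rw [h'] at hveq; simp [hε] at hveq; exact hvne hveq
      · rw [hV, hveq, hε]; congr 1; push_cast; ring
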